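/- Let G be a finite simple graph, let (β, y) be an eigenpair of some signed induced subgraph of G with β ≠ 0, and let λ be a complex number with λ³ = β². Then λ is an eigenvalue of the 3-power hypergraph G^(3). -/

import Mathlib

open Finset

/-- `(lam, x)` is an eigenpair of the `k`-uniform hypergraph with hyperedge set `E`:
`x` is nonzero and for every vertex `i`,
`lam * x i ^ (k-1) = ∑_{e ∈ E, i ∈ e} ∏_{v ∈ e \ {i}} x v`. -/
def IsHypergraphEigenpair {W : Type*} [Fintype W] [DecidableEq W]
    (k : ℕ) (E : Finset (Finset W)) (lam : ℂ) (x : W → ℂ) : Prop :=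
  x ≠ 0 ∧ ∀ i : W, lam * x i ^ (k - 1) =
    ∑ e ∈ E.filter (fun e => i ∈ e), ∏ v ∈ e.erase i, x v

/-- `lam` is an eigenvalue of the `k`-uniform hypergraph with hyperedge set `E`. -/
def IsHypergraphEigenvalue {W : Type*} [Fintype W] [DecidableEq W]
    (k : ℕ) (E : Finset (Finset W)) (lam : ℂ) : Prop :=
  ∃ x, IsHypergraphEigenpair k E lam x

/-- The hyperedge of the `k`-power hypergraph `G^(k)` corresponding to the edge `e` of `G`:
it consists of the two endpoints of `e` together with the `k - 2` added vertices on `e`. -/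
def powerEdge {V : Type*} [Fintype V] [DecidableEq V] (G : SimpleGraph V) [DecidableRel G.Adj]
    (k : ℕ) (e : G.edgeSet) : Finset (V ⊕ (G.edgeSet × Fin (k - 2))) :=
  Finset.univ.filter (fun v =>
    (∃ i, v = Sum.inl i ∧ i ∈ (e : Sym2 V)) ∨ ∃ t, v = Sum.inr (e, t))

/-- The hyperedge set of the `k`-power hypergraph `G^(k)`, whose vertices are the vertices of `G`
(`Sum.inl`) together with `k - 2` new vertices for each edge of `G` (`Sum.inr`). -/
def powerEdges {V : Type*} [Fintype V] [DecidableEq V] (G : SimpleGraph V) [DecidableRel G.Adj]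
    (k : ℕ) : Finset (Finset (V ⊕ (G.edgeSet × Fin (k - 2)))) :=
  Finset.univ.image (powerEdge G k)

section Aux

variable {V : Type*} [Fintype V] [DecidableEq V] (G : SimpleGraph V) [DecidableRel G.Adj]

lemma mem_inl_powerEdge (i : V) (e : G.edgeSet) :
    Sum.inl i ∈ powerEdge G 3 e ↔ i ∈ (e : Sym2 V) := by
  simp [powerEdge]

lemma mem_inr_powerEdge (f e : G.edgeSet) (t : Fin (3 - 2)) :
    Sum.inr (f, t) ∈ powerEdge G 3 e ↔ f = e := by
  constructor
  · intro h
    exact (by simpa [powerEdge] using h : f = e ∧ t = 0).1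
  · rintro rfl
    simp [powerEdge]
    exact Fin.ext (by have := t.isLt; omega)

lemma powerEdge_injective : Function.Injective (powerEdge G 3) := by
  intro e f h
  have : Sum.inr (e, (0 : Fin (3 - 2))) ∈ powerEdge G 3 f := by
    rw [← h, mem_inr_powerEdge]
  rwa [mem_inr_powerEdge] at this

lemma powerEdge_eq (i j : V) (h : s(i,j) ∈ G.edgeSet) :
    powerEdge G 3 ⟨s(i,j), h⟩ =
      {Sum.inl i, Sum.inl j, Sum.inr (⟨s(i,j), h⟩, (0 : Fin (3 - 2)))} := by
  ext v
  rcases v with a | ⟨f, t⟩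
  · simp [powerEdge, Sym2.mem_iff]
  · simp only [powerEdge, Sym2.mem_iff, mem_filter, mem_univ, true_and, mem_insert,
      mem_singleton]
    constructor
    · rintro (⟨i', hi', -⟩ | ⟨t', ht'⟩)
      · exact absurd hi' (by simp)
      · simp at ht'
        right; right
        have ht0 : ∀ s : Fin (3-2), s = 0 := by decide
        simp [ht'.1, ht0 t]
    · rintro ((h | h) | h) <;> simp at h
      right
      exact ⟨t, by simp [h.1]⟩

lemma sum_powerEdges (w : V ⊕ (G.edgeSet × Fin (3 - 2))) (f : Finset (V ⊕ (G.edgeSet × Fin (3 - 2))) → ℂ) :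
    ∑ E ∈ (powerEdges G 3).filter (fun E => w ∈ E), f E
      = ∑ e ∈ univ.filter (fun e : G.edgeSet => w ∈ powerEdge G 3 e), f (powerEdge G 3 e) := by
  rw [powerEdges, Finset.filter_image, Finset.sum_image (fun a _ b _ h => powerEdge_injective G h)]

end Aux

/-- **Lemma (k = 3 case).** If `(β, y)` is an eigenpair, with `β ≠ 0`, of a signed induced
subgraph of `G` (induced on vertex set `S` with sign function `π`), and `lam³ = β²`, then
`lam` is an eigenvalue of the 3-power hypergraph `G^(3)`. -/
theorem eigenvalue_of_signed_induced_subgraph_eigenpair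
    {V : Type*} [Fintype V] [DecidableEq V] (G : SimpleGraph V) [DecidableRel G.Adj]
    (S : Finset V) (π : Sym2 V → ℂ)
    (hπ : ∀ i j : V, i ∈ S → j ∈ S → G.Adj i j → π s(i, j) = 1 ∨ π s(i, j) = -1)
    (β lam : ℂ) (y : ↥S → ℂ) (hy : y ≠ 0)
    (heig : Matrix.mulVec
        (Matrix.of fun i j : ↥S => if G.Adj ↑i ↑j then π s((i : V), (j : V)) else 0) y
        = β • y)
    (hβ : β ≠ 0) (hlam : lam ^ 3 = β ^ 2) :
    IsHypergraphEigenvalue 3 (powerEdges G 3) lam := by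
  classical
  -- extend y to all of V
  set Y : V → ℂ := fun i => if h : i ∈ S then y ⟨i, h⟩ else 0 with hYdef
  -- cube roots
  set z : V → ℂ := fun i => (Y i ^ 2) ^ (((3 : ℕ) : ℂ))⁻¹ with hzdef
  have hz3 : ∀ i, z i ^ 3 = Y i ^ 2 := fun i => Complex.cpow_nat_inv_pow _ (by norm_num)
  have hz0 : ∀ i, z i = 0 ↔ Y i = 0 := by
    intro i
    constructor
    · intro h
      have := hz3 i
      rw [h] at this
      simpa [pow_eq_zero_iff] using this.symm
    · intro h
      have := hz3 i
      rw [h] at this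
      simpa [pow_eq_zero_iff] using this
  have hYnotS : ∀ i, i ∉ S → Y i = 0 := by
    intro i hi; simp [hYdef, hi]
  -- the values on added vertices
  have w2symm : ∀ i j : V,
      (fun i j => π s(i,j) * lam * z i ^ 2 * z j ^ 2 / (β * Y i * Y j)) i j
      = (fun i j => π s(i,j) * lam * z i ^ 2 * z j ^ 2 / (β * Y i * Y j)) j i := by
    intro i j
    simp only
    rw [Sym2.eq_swap]
    ring_nf
  set w2 : V → V → ℂ := fun i j => π s(i,j) * lam * z i ^ 2 * z j ^ 2 / (β * Y i * Y j)
    with hw2def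
  set Wf : Sym2 V → ℂ := Sym2.lift ⟨w2, w2symm⟩ with hWfdef
  have hWf : ∀ i j : V, Wf s(i,j) = w2 i j := fun i j => Sym2.lift_mk _ i j
  set x : (V ⊕ (G.edgeSet × Fin (3 - 2))) → ℂ :=
    fun v => Sum.elim z (fun p => Wf (p.1 : Sym2 V)) v with hxdef
  -- the row equation of the signed adjacency matrix, extended to V
  have hrow : ∀ i : V, i ∈ S →
      ∑ j : V, (if G.Adj i j then π s(i,j) else 0) * Y j = β * Y i := by
    intro i hi
    have h1 := congrFun heig ⟨i, hi⟩
    simp only [Matrix.mulVec, dotProduct, Matrix.of_apply, Pi.smul_apply,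
      smul_eq_mul] at h1
    have h2 : ∑ j : V, (if G.Adj i j then π s(i,j) else 0) * Y j
        = ∑ j ∈ S, (if G.Adj i j then π s(i,j) else 0) * Y j := by
      refine (Finset.sum_subset (Finset.subset_univ S) ?_).symm
      intro j _ hj
      simp [hYnotS j hj]
    rw [h2, ← Finset.sum_attach S (fun j => (if G.Adj i j then π s(i,j) else 0) * Y j)]
    have h3 : ∀ j : ↥S, Y (j : V) = y j := by
      intro j; simp [hYdef, j.2]
    calc ∑ j : ↥S, (if G.Adj i ↑j then π s(i, ↑j) else 0) * Y ↑j
        = ∑ j : ↥S, (if G.Adj i ↑j then π s(i, ↑j) else 0) * y j := by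
          refine Finset.sum_congr rfl fun j _ => by rw [h3]
      _ = β * Y i := by rw [h1, h3 ⟨i, hi⟩]
  -- key algebraic identities
  have key1 : ∀ i j : V, G.Adj i j → lam * (w2 i j) ^ 2 = z i * z j := by
    intro i j hadj
    by_cases hi : Y i = 0
    · have : z i = 0 := (hz0 i).2 hi
      simp [hw2def, this]
    by_cases hj : Y j = 0
    · have : z j = 0 := (hz0 j).2 hj
      simp [hw2def, this]
    have hiS : i ∈ S := by by_contra h; exact hi (hYnotS i h)
    have hjS : j ∈ S := by by_contra h; exact hj (hYnotS j h)
    have hπ2 : π s(i,j) ^ 2 = 1 := by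
      rcases hπ i j hiS hjS hadj with h | h <;> rw [h] <;> ring
    have hzi : z i ≠ 0 := fun h => hi ((hz0 i).1 h)
    have hzj : z j ≠ 0 := fun h => hj ((hz0 j).1 h)
    rw [hw2def]
    simp only
    rw [div_pow, mul_div_assoc', div_eq_iff (pow_ne_zero _ (mul_ne_zero (mul_ne_zero hβ hi) hj))]
    linear_combination (lam ^ 3 * z i ^ 4 * z j ^ 4) * hπ2
      + (z i ^ 4 * z j ^ 4) * hlam
      + (z i * z j * β ^ 2 * Y j ^ 2) * hz3 i
      + (z i * z j * β ^ 2 * z i ^ 3) * hz3 j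
  have key2 : ∀ i j : V, G.Adj i j →
      z j * w2 i j = lam * z i ^ 2 / (β * Y i) * (π s(i,j) * Y j) := by
    intro i j hadj
    by_cases hi : Y i = 0
    · have : z i = 0 := (hz0 i).2 hi
      simp [hw2def, this]
    by_cases hj : Y j = 0
    · have : z j = 0 := (hz0 j).2 hj
      simp [hw2def, this, hj]
    have hzi : z i ≠ 0 := fun h => hi ((hz0 i).1 h)
    have hzj : z j ≠ 0 := fun h => hj ((hz0 j).1 h)
    rw [hw2def]
    simp only
    rw [mul_div_assoc', div_mul_eq_mul_div,
      div_eq_div_iff (mul_ne_zero (mul_ne_zero hβ hi) hj) (mul_ne_zero hβ hi)]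
    linear_combination (π s(i,j) * lam * z i ^ 2 * β * Y i) * hz3 j
  -- nonzero
  obtain ⟨i0, hi0⟩ := Function.ne_iff.1 hy
  have hxne : x ≠ 0 := by
    intro h
    have h1 : x (Sum.inl (i0 : V)) = 0 := by rw [h]; rfl
    have h2 : Y (i0 : V) = y i0 := by simp [hYdef, i0.2]
    have : z (i0 : V) = 0 := h1
    rw [hz0, h2] at this
    exact hi0 this
  refine ⟨x, hxne, ?_⟩
  intro v
  rw [sum_powerEdges]
  rcases v with i | ⟨f, t⟩
  · -- original vertex
    show lam * z i ^ 2 = _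
    have hfilter : (univ.filter (fun e : G.edgeSet => Sum.inl i ∈ powerEdge G 3 e))
        = univ.filter (fun e : G.edgeSet => i ∈ (e : Sym2 V)) := by
      apply Finset.filter_congr
      intro e _
      exact mem_inl_powerEdge G i e
    rw [hfilter]
    have hsum : ∑ e ∈ univ.filter (fun e : G.edgeSet => i ∈ (e : Sym2 V)),
        ∏ v ∈ (powerEdge G 3 e).erase (Sum.inl i), x v
          = ∑ j ∈ G.neighborFinset i, z j * w2 i j := by
      symm
      refine Finset.sum_bij
        (fun (j : V) (hj : j ∈ G.neighborFinset i) =>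
          (⟨s(i,j), (G.mem_edgeSet).2 ((SimpleGraph.mem_neighborFinset G i j).1 hj)⟩ :
            G.edgeSet)) ?_ ?_ ?_ ?_
      · intro j hj
        simp
      · intro j1 h1 j2 h2 heq
        rw [Subtype.mk.injEq] at heq
        exact Sym2.congr_right.1 heq
      · rintro ⟨p, hp⟩ he
        simp only [mem_filter, mem_univ, true_and] at he
        refine ⟨Sym2.Mem.other' he, ?_, ?_⟩
        · rw [SimpleGraph.mem_neighborFinset]
          have h1 : s(i, Sym2.Mem.other' he) = p := Sym2.other_spec' he
          have := hp
          rw [← h1] at this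
          exact (G.mem_edgeSet).1 this
        · exact Subtype.ext (Sym2.other_spec' he)
      · intro j hj
        have hadj : G.Adj i j := (SimpleGraph.mem_neighborFinset G i j).1 hj
        have hne : (Sum.inl i : V ⊕ (G.edgeSet × Fin (3 - 2))) ≠ Sum.inl j := by
          simp [hadj.ne]
        rw [powerEdge_eq]
        rw [Finset.erase_insert]
        · rw [Finset.prod_insert (by simp), Finset.prod_singleton]
          show z j * w2 i j = z j * Wf s(i,j)
          rw [hWf]
        · simp only [mem_insert, mem_singleton]
          push_neg
          exact ⟨hne, by simp⟩
    rw [hsum]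
    have hsum2 : ∑ j ∈ G.neighborFinset i, z j * w2 i j
        = lam * z i ^ 2 / (β * Y i) * ∑ j ∈ G.neighborFinset i, π s(i,j) * Y j := by
      rw [Finset.mul_sum]
      refine Finset.sum_congr rfl fun j hj => ?_
      exact key2 i j ((SimpleGraph.mem_neighborFinset G i j).1 hj)
    rw [hsum2]
    by_cases hi : Y i = 0
    · have hzi : z i = 0 := (hz0 i).2 hi
      simp [hzi]
    have hiS : i ∈ S := by by_contra h; exact hi (hYnotS i h)
    have hnb : ∑ j ∈ G.neighborFinset i, π s(i,j) * Y j = β * Y i := by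
      rw [← hrow i hiS]
      rw [SimpleGraph.neighborFinset_eq_filter, Finset.sum_filter]
      refine Finset.sum_congr rfl fun j _ => ?_
      by_cases h : G.Adj i j <;> simp [h]
    rw [hnb]
    field_simp
  · -- added vertex
    have hfilter : (univ.filter (fun e : G.edgeSet => Sum.inr (f, t) ∈ powerEdge G 3 e)) = {f} := by
      ext e
      simp only [mem_filter, mem_univ, true_and, mem_singleton]
      rw [mem_inr_powerEdge]
      exact eq_comm
    rw [hfilter, Finset.sum_singleton]
    have ht0 : ∀ s : Fin (3-2), s = 0 := by decide
    obtain ⟨p, hp⟩ := f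
    induction p using Sym2.ind with
    | _ i j =>
      have hadj : G.Adj i j := hp
      have hne : i ≠ j := hadj.ne
      rw [powerEdge_eq, ht0 t]
      have h1 : (({Sum.inl i, Sum.inl j, Sum.inr (⟨s(i,j), hp⟩, (0 : Fin (3 - 2)))} :
          Finset (V ⊕ (G.edgeSet × Fin (3 - 2)))).erase
            (Sum.inr (⟨s(i,j), hp⟩, (0 : Fin (3 - 2)))))
          = {Sum.inl i, Sum.inl j} := by
        ext v
        simp only [Finset.mem_erase, mem_insert, mem_singleton]
        constructor
        · rintro ⟨hv, h | h | h⟩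
          · exact Or.inl h
          · exact Or.inr h
          · exact absurd h hv
        · rintro (rfl | rfl) <;> simp
      rw [h1, Finset.prod_insert (by simp [hne]), Finset.prod_singleton]
      show lam * Wf s(i,j) ^ 2 = z i * z j
      rw [hWf]
      exact key1 i j hadj
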